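/- Let J_n^{(k,2)} ⊂ E_n be the degree-n component of the ideal of ℂ[e[0],e[-1],...] generated by all coefficients of e(z)^{k+1} together with e[0]^{b_0+1}. Then under the pairing ⟨e(z_1)···e(z_n), f⟩ = f(z_1,...,z_n), the orthogonal complement of J_n^{(k,2)} in F_n = ℂ[x_1,...,x_n]^{S_n} is exactly the space of symmetric polynomials f such that f = 0 whenever x_1 = ··· = x_{k+1}, and f = 0 whenever x_1 = ··· = x_{b_0+1} = 0. -/

import Mathlib

open MvPolynomial

/-- The coefficient of `z^N` in `e(z)^(k+1)`, where `e(z) = Σ_{i≥0} e[-i] z^i` and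
`e[-i] = X i` in `ℂ[e[0], e[-1], …] = MvPolynomial ℕ ℂ`. -/
noncomputable def coefPow (k N : ℕ) : MvPolynomial ℕ ℂ :=
  ∑ t ∈ Finset.Nat.antidiagonalTuple (k + 1) N, ∏ j : Fin (k + 1), X (t j)

namespace OCK2

lemma sum_single_apply {n : ℕ} (w : Fin n → ℕ) (a : Fin n) :
    (∑ j : Fin n, Finsupp.single j (w j)) a = w a := by
  classical
  rw [Finsupp.finset_sum_apply]
  simp [Finsupp.single_apply]

lemma castLE_sum_single_apply {n c : ℕ} (h : c ≤ n) (t : Fin c → ℕ) (a : Fin n) :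
    (∑ j : Fin c, Finsupp.single (Fin.castLE h j) (t j)) a
      = if ha : (a : ℕ) < c then t ⟨a, ha⟩ else 0 := by
  classical
  rw [Finsupp.finset_sum_apply]
  split_ifs with ha
  · rw [Finset.sum_eq_single (⟨(a : ℕ), ha⟩ : Fin c)]
    · simp [Finsupp.single_apply, Fin.ext_iff]
    · intro j _ hj
      rw [Finsupp.single_apply, if_neg]
      intro hc
      exact hj (by apply Fin.ext; simpa [Fin.ext_iff] using hc)
    · simp
  · apply Finset.sum_eq_zero
    intro j _
    rw [Finsupp.single_apply, if_neg]
    intro hc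
    exact ha (by simpa [← hc] using j.isLt)

lemma filter_lt_eq_map {n c : ℕ} (h : c ≤ n) :
    Finset.univ.filter (fun i : Fin n => (i : ℕ) < c)
      = Finset.univ.map ⟨Fin.castLE h, Fin.castLE_injective h⟩ := by
  ext i
  simp only [Finset.mem_filter, Finset.mem_univ, true_and, Finset.mem_map,
    Function.Embedding.coeFn_mk]
  constructor
  · intro hi
    exact ⟨⟨(i : ℕ), hi⟩, Fin.ext rfl⟩
  · rintro ⟨j, rfl⟩
    exact j.isLt

/-- The embedding of `Fin m` into the tail of `Fin n`, `n = c + m`. -/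
def tailEmb {n c m : ℕ} (h : c + m = n) : Fin m ↪ Fin n where
  toFun j := ⟨c + (j : ℕ), by have := j.isLt; omega⟩
  inj' := by
    intro a b hab
    apply Fin.ext
    have : c + (a : ℕ) = c + (b : ℕ) := congrArg Fin.val hab
    omega

lemma filter_ge_eq_map {n c m : ℕ} (h : c + m = n) :
    Finset.univ.filter (fun i : Fin n => ¬ (i : ℕ) < c)
      = Finset.univ.map (tailEmb h) := by
  ext i
  simp only [Finset.mem_filter, Finset.mem_univ, true_and, Finset.mem_map]
  constructor
  · intro hi
    refine ⟨⟨(i : ℕ) - c, by have := i.isLt; omega⟩, ?_⟩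
    apply Fin.ext
    show c + ((i : ℕ) - c) = (i : ℕ)
    omega
  · rintro ⟨j, rfl⟩
    show ¬ c + (j : ℕ) < c
    omega

lemma prod_filter_lt {M : Type*} [CommMonoid M] {n c : ℕ} (h : c ≤ n) (G : Fin n → M) :
    ∏ i ∈ Finset.univ.filter (fun i : Fin n => (i : ℕ) < c), G i
      = ∏ j : Fin c, G (Fin.castLE h j) := by
  rw [filter_lt_eq_map h, Finset.prod_map]
  rfl

lemma sum_filter_lt {M : Type*} [AddCommMonoid M] {n c : ℕ} (h : c ≤ n) (G : Fin n → M) :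
    ∑ i ∈ Finset.univ.filter (fun i : Fin n => (i : ℕ) < c), G i
      = ∑ j : Fin c, G (Fin.castLE h j) := by
  rw [filter_lt_eq_map h, Finset.sum_map]
  rfl

lemma card_filter_lt {n c : ℕ} (h : c ≤ n) :
    (Finset.univ.filter (fun i : Fin n => (i : ℕ) < c)).card = c := by
  rw [filter_lt_eq_map h, Finset.card_map, Finset.card_univ, Fintype.card_fin]

lemma prod_filter_ge {M : Type*} [CommMonoid M] {n c m : ℕ} (h : c + m = n) (G : Fin n → M) :
    ∏ i ∈ Finset.univ.filter (fun i : Fin n => ¬ (i : ℕ) < c), G i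
      = ∏ j : Fin m, G (tailEmb h j) := by
  rw [filter_ge_eq_map h, Finset.prod_map]

lemma prod_fin_get (l : List ℕ) {n : ℕ} (hl : l.length = n) :
    (∏ j : Fin n, (X (l.get (Fin.cast hl.symm j)) : MvPolynomial ℕ ℂ))
      = (l.map X).prod := by
  subst hl
  simp only [Fin.cast_refl, id]
  rw [← List.prod_ofFn]
  congr 1
  rw [show (fun j : Fin l.length => (X (l.get j) : MvPolynomial ℕ ℂ)) = X ∘ l.get from rfl,
    ← List.map_ofFn, List.ofFn_get]

lemma prod_map_X_toList (d : ℕ →₀ ℕ) :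
    (((Finsupp.toMultiset d).toList).map (X : ℕ → MvPolynomial ℕ ℂ)).prod
      = monomial d 1 := by
  have h1 : (((Finsupp.toMultiset d).toList).map (X : ℕ → MvPolynomial ℕ ℂ)).prod
      = ((Finsupp.toMultiset d).map (X : ℕ → MvPolynomial ℕ ℂ)).prod := by
    conv_rhs => rw [← Multiset.coe_toList (Finsupp.toMultiset d)]
    rw [Multiset.map_coe, Multiset.prod_coe]
  rw [h1, Finsupp.toMultiset_map, Finsupp.prod_toMultiset,
    Finsupp.prod_mapDomain_index_inj (MvPolynomial.X_injective)]
  rw [monomial_eq, C_1, one_mul]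

lemma length_toList (d : ℕ →₀ ℕ) :
    ((Finsupp.toMultiset d).toList).length = d.degree := by
  rw [Multiset.length_toList, Finsupp.card_toMultiset]
  rfl

/-- Condition 2 in coefficient form. -/
lemma aeval2_eq_zero_iff {n : ℕ} (c : ℕ) (f : MvPolynomial (Fin n) ℂ) :
    (aeval (fun i : Fin n => if (i : ℕ) < c then (0 : MvPolynomial (Fin n) ℂ) else X i) f = 0)
      ↔ ∀ e : Fin n →₀ ℕ, (∀ i : Fin n, (i : ℕ) < c → e i = 0) → coeff e f = 0 := by
  classical
  set g2 : Fin n → MvPolynomial (Fin n) ℂ :=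
    fun i => if (i : ℕ) < c then (0 : MvPolynomial (Fin n) ℂ) else X i with hg2
  have hterm : ∀ (e : Fin n →₀ ℕ) (cc : ℂ), aeval g2 (monomial e cc)
      = if (∀ i : Fin n, (i : ℕ) < c → e i = 0) then monomial e cc else 0 := by
    intro e cc
    rw [aeval_monomial]
    by_cases hgood : ∀ i : Fin n, (i : ℕ) < c → e i = 0
    · rw [if_pos hgood]
      have hp : (e.prod fun i k => g2 i ^ k) = e.prod fun i k => (X i : MvPolynomial (Fin n) ℂ) ^ k := by
        apply Finsupp.prod_congr
        intro i hi
        have : ¬ (i : ℕ) < c := fun h => (Finsupp.mem_support_iff.1 hi) (hgood i h)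
        simp [hg2, this]
      rw [hp, algebraMap_eq, ← monomial_eq]
    · rw [if_neg hgood]
      push_neg at hgood
      obtain ⟨i, hic, hei⟩ := hgood
      have hz : (e.prod fun i k => g2 i ^ k) = 0 := by
        apply Finset.prod_eq_zero (Finsupp.mem_support_iff.2 hei)
        simp [hg2, hic, zero_pow hei]
      rw [hz, mul_zero]
  constructor
  · intro h0 e hgood
    have hco : coeff e (aeval g2 f) = coeff e f := by
      conv_lhs => rw [f.as_sum, map_sum]
      rw [coeff_sum]
      have : ∀ e' ∈ f.support, coeff e (aeval g2 (monomial e' (coeff e' f)))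
          = if e' = e then coeff e' f else 0 := by
        intro e' _
        rw [hterm]
        by_cases hg : ∀ i : Fin n, (i : ℕ) < c → e' i = 0
        · rw [if_pos hg, coeff_monomial]
        · rw [if_neg hg, if_neg, coeff_zero]
          rintro rfl
          exact hg hgood
      rw [Finset.sum_congr rfl this, Finset.sum_ite_eq' f.support e (fun e' => coeff e' f)]
      split_ifs with hmem
      · rfl
      · exact (MvPolynomial.notMem_support_iff.1 hmem).symm
    rw [h0, coeff_zero] at hco
    exact hco.symm
  · intro h0
    conv_lhs => rw [f.as_sum, map_sum]
    apply Finset.sum_eq_zero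
    intro e _
    rw [hterm]
    split_ifs with hg
    · rw [h0 e hg, monomial_zero]
    · rfl

/-! ### Condition 1 machinery -/

noncomputable def psiN {n : ℕ} (N : ℕ) (s : Fin n →₀ ℕ) : (Unit ⊕ Fin n) →₀ ℕ :=
  Finsupp.single (Sum.inl ()) N + Finsupp.mapDomain Sum.inr s

noncomputable def expE {n k : ℕ} (h : k + 1 ≤ n) (t : Fin (k + 1) → ℕ)
    (s : Fin n →₀ ℕ) : Fin n →₀ ℕ :=
  s + ∑ j : Fin (k + 1), Finsupp.single (Fin.castLE h j) (t j)

lemma expE_apply {n k : ℕ} (h : k + 1 ≤ n) (t : Fin (k + 1) → ℕ) (s : Fin n →₀ ℕ)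
    (a : Fin n) :
    expE h t s a = s a + if ha : (a : ℕ) < k + 1 then t ⟨a, ha⟩ else 0 := by
  rw [expE, Finsupp.add_apply, castLE_sum_single_apply]

lemma psiN_inj {n : ℕ} {N₁ N₂ : ℕ} {s₁ s₂ : Fin n →₀ ℕ}
    (hh : psiN N₁ s₁ = psiN N₂ s₂) : N₁ = N₂ ∧ s₁ = s₂ := by
  have hinl : (Sum.inl () : Unit ⊕ Fin n) ∉ Set.range (Sum.inr : Fin n → Unit ⊕ Fin n) := by
    rintro ⟨x, hx⟩; cases hx
  constructor
  · have h1 := congrArg (fun v => v (Sum.inl ())) hh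
    simpa [psiN, Finsupp.add_apply, Finsupp.single_apply,
      Finsupp.mapDomain_notin_range _ _ hinl] using h1
  · ext i
    have h1 := congrArg (fun v => v (Sum.inr i)) hh
    simpa [psiN, Finsupp.add_apply, Finsupp.single_apply,
      Finsupp.mapDomain_apply Sum.inr_injective] using h1

noncomputable def lowSum (k : ℕ) {n : ℕ} (e : Fin n →₀ ℕ) : ℕ :=
  ∑ i ∈ Finset.univ.filter (fun i : Fin n => (i : ℕ) < k + 1), e i

noncomputable def highPart (k : ℕ) {n : ℕ} (e : Fin n →₀ ℕ) : Fin n →₀ ℕ :=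
  e.filter (fun i => ¬ (i : ℕ) < k + 1)

lemma highPart_apply_low (k : ℕ) {n : ℕ} (e : Fin n →₀ ℕ) {i : Fin n}
    (hi : (i : ℕ) < k + 1) : highPart k e i = 0 := by
  rw [highPart, Finsupp.filter_apply, if_neg (by simpa using hi)]

lemma highPart_apply_high (k : ℕ) {n : ℕ} (e : Fin n →₀ ℕ) {i : Fin n}
    (hi : ¬ (i : ℕ) < k + 1) : highPart k e i = e i := by
  rw [highPart, Finsupp.filter_apply, if_pos (by simpa using hi)]

lemma aeval1_monomial {n : ℕ} (k : ℕ) (e : Fin n →₀ ℕ) (cc : ℂ) :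
    aeval (fun i : Fin n => if (i : ℕ) < k + 1 then
        (X (Sum.inl ()) : MvPolynomial (Unit ⊕ Fin n) ℂ) else X (Sum.inr i)) (monomial e cc)
      = monomial (psiN (lowSum k e) (highPart k e)) cc := by
  classical
  set g1 : Fin n → MvPolynomial (Unit ⊕ Fin n) ℂ :=
    fun i => if (i : ℕ) < k + 1 then X (Sum.inl ()) else X (Sum.inr i) with hg1
  rw [aeval_monomial]
  have hsplit : (e.prod fun i k' => g1 i ^ k')
      = (∏ i ∈ e.support.filter (fun i : Fin n => (i : ℕ) < k + 1), g1 i ^ e i)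
        * ∏ i ∈ e.support.filter (fun i : Fin n => ¬ (i : ℕ) < k + 1), g1 i ^ e i :=
    (Finset.prod_filter_mul_prod_filter_not e.support _ _).symm
  have hlow : (∏ i ∈ e.support.filter (fun i : Fin n => (i : ℕ) < k + 1), g1 i ^ e i)
      = (X (Sum.inl ()) : MvPolynomial (Unit ⊕ Fin n) ℂ) ^ (lowSum k e) := by
    have h1 : ∀ i ∈ e.support.filter (fun i : Fin n => (i : ℕ) < k + 1),
        g1 i ^ e i = (X (Sum.inl ()) : MvPolynomial (Unit ⊕ Fin n) ℂ) ^ e i := by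
      intro i hi
      rw [hg1]
      simp only [(Finset.mem_filter.1 hi).2, if_true]
    rw [Finset.prod_congr rfl h1, Finset.prod_pow_eq_pow_sum]
    congr 1
    apply Finset.sum_subset (Finset.filter_subset_filter _ (Finset.subset_univ _))
    intro i hi hni
    have : i ∉ e.support := by
      intro hmem
      exact hni (Finset.mem_filter.2 ⟨hmem, (Finset.mem_filter.1 hi).2⟩)
    exact Finsupp.notMem_support_iff.1 this
  have hhigh : (∏ i ∈ e.support.filter (fun i : Fin n => ¬ (i : ℕ) < k + 1), g1 i ^ e i)
      = monomial (Finsupp.mapDomain Sum.inr (highPart k e)) (1 : ℂ) := by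
    have h1 : ∀ i ∈ e.support.filter (fun i : Fin n => ¬ (i : ℕ) < k + 1),
        g1 i ^ e i = (X (Sum.inr i) : MvPolynomial (Unit ⊕ Fin n) ℂ) ^ e i := by
      intro i hi
      rw [hg1]
      simp only [(Finset.mem_filter.1 hi).2, if_false]
    rw [Finset.prod_congr rfl h1]
    have h2 : (∏ i ∈ e.support.filter (fun i : Fin n => ¬ (i : ℕ) < k + 1),
          (X (Sum.inr i) : MvPolynomial (Unit ⊕ Fin n) ℂ) ^ e i)
        = rename Sum.inr (∏ i ∈ e.support.filter (fun i : Fin n => ¬ (i : ℕ) < k + 1),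
            (X i : MvPolynomial (Fin n) ℂ) ^ e i) := by
      rw [map_prod]
      apply Finset.prod_congr rfl
      intro i _
      rw [map_pow, rename_X]
    rw [h2]
    have h3 : (∏ i ∈ e.support.filter (fun i : Fin n => ¬ (i : ℕ) < k + 1),
          (X i : MvPolynomial (Fin n) ℂ) ^ e i) = monomial (highPart k e) (1 : ℂ) := by
      rw [← prod_X_pow_eq_monomial]
      apply Finset.prod_congr
      · rw [highPart, Finsupp.support_filter]
      · intro x hx
        rw [highPart, Finsupp.filter_apply_pos]
        exact (Finset.mem_filter.1 hx).2
    rw [h3, rename_monomial]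
  rw [hsplit, hlow, hhigh, algebraMap_eq, X_pow_eq_monomial, monomial_mul, C_mul_monomial]
  rw [psiN]
  ring_nf

lemma coeff_aeval1 {n : ℕ} (k : ℕ) (f : MvPolynomial (Fin n) ℂ) (κ : (Unit ⊕ Fin n) →₀ ℕ) :
    coeff κ (aeval (fun i : Fin n => if (i : ℕ) < k + 1 then
        (X (Sum.inl ()) : MvPolynomial (Unit ⊕ Fin n) ℂ) else X (Sum.inr i)) f)
      = ∑ e ∈ f.support,
          if psiN (lowSum k e) (highPart k e) = κ then coeff e f else 0 := by
  classical
  conv_lhs => rw [f.as_sum, map_sum]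
  rw [coeff_sum]
  apply Finset.sum_congr rfl
  intro e _
  rw [aeval1_monomial, coeff_monomial]

lemma lowSum_eq {n k : ℕ} (hkn : k + 1 ≤ n) (e : Fin n →₀ ℕ) :
    lowSum k e = ∑ j : Fin (k + 1), e (Fin.castLE hkn j) := by
  rw [lowSum]
  exact sum_filter_lt hkn (fun i => e i)

lemma castLE_coe {n k : ℕ} (hkn : k + 1 ≤ n) (a : Fin n) (ha : (a : ℕ) < k + 1) :
    Fin.castLE hkn (⟨(a : ℕ), ha⟩ : Fin (k + 1)) = a := Fin.ext rfl

lemma lowSum_expE {n k : ℕ} (hkn : k + 1 ≤ n) (t : Fin (k + 1) → ℕ) (s : Fin n →₀ ℕ)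
    (hs : ∀ i : Fin n, (i : ℕ) < k + 1 → s i = 0) :
    lowSum k (expE hkn t s) = ∑ j : Fin (k + 1), t j := by
  rw [lowSum_eq hkn]
  apply Finset.sum_congr rfl
  intro j _
  rw [expE_apply]
  have hj : ((Fin.castLE hkn j : Fin n) : ℕ) < k + 1 := j.isLt
  rw [dif_pos hj, hs _ hj, zero_add]
  exact congrArg t (Fin.ext rfl)

lemma highPart_expE {n k : ℕ} (hkn : k + 1 ≤ n) (t : Fin (k + 1) → ℕ) (s : Fin n →₀ ℕ)
    (hs : ∀ i : Fin n, (i : ℕ) < k + 1 → s i = 0) :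
    highPart k (expE hkn t s) = s := by
  ext i
  by_cases hi : (i : ℕ) < k + 1
  · rw [highPart_apply_low k _ hi, hs i hi]
  · rw [highPart_apply_high k _ hi, expE_apply, dif_neg hi, add_zero]

lemma expE_proj {n k : ℕ} (hkn : k + 1 ≤ n) (s : Fin n →₀ ℕ)
    (hs : ∀ i : Fin n, (i : ℕ) < k + 1 → s i = 0) (e : Fin n →₀ ℕ)
    (he : highPart k e = s) :
    expE hkn (fun j => e (Fin.castLE hkn j)) s = e := by
  ext i
  rw [expE_apply]
  by_cases hi : (i : ℕ) < k + 1
  · rw [dif_pos hi, hs i hi, zero_add, castLE_coe hkn i hi]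
  · rw [dif_neg hi, add_zero, ← he, highPart_apply_high k _ hi]

lemma expE_castLE {n k : ℕ} (hkn : k + 1 ≤ n) (t : Fin (k + 1) → ℕ) (s : Fin n →₀ ℕ)
    (hs : ∀ i : Fin n, (i : ℕ) < k + 1 → s i = 0) (j : Fin (k + 1)) :
    expE hkn t s (Fin.castLE hkn j) = t j := by
  rw [expE_apply]
  have hj : ((Fin.castLE hkn j : Fin n) : ℕ) < k + 1 := j.isLt
  rw [dif_pos hj, hs _ hj, zero_add]
  exact congrArg t (Fin.ext rfl)

lemma fiber_sum {n k : ℕ} (hkn : k + 1 ≤ n) (f : MvPolynomial (Fin n) ℂ)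
    (N : ℕ) (s : Fin n →₀ ℕ) (hs : ∀ i : Fin n, (i : ℕ) < k + 1 → s i = 0) :
    (∑ e ∈ f.support,
        if psiN (lowSum k e) (highPart k e) = psiN N s then coeff e f else 0)
      = ∑ t ∈ Finset.Nat.antidiagonalTuple (k + 1) N, coeff (expE hkn t s) f := by
  classical
  rw [← Finset.sum_filter]
  have hne : ∀ t ∈ Finset.Nat.antidiagonalTuple (k + 1) N,
      coeff (expE hkn t s) f ≠ 0 → expE hkn t s ∈ f.support :=
    fun t _ h => Finsupp.mem_support_iff.2 h
  rw [← Finset.sum_filter_of_ne hne]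
  refine Finset.sum_bij' (fun e _ => fun j => e (Fin.castLE hkn j))
    (fun t _ => expE hkn t s) ?_ ?_ ?_ ?_ ?_
  · intro e he
    obtain ⟨hmem, heq⟩ := Finset.mem_filter.1 he
    obtain ⟨hN, hS⟩ := psiN_inj heq
    rw [Finset.mem_filter, Finset.Nat.mem_antidiagonalTuple]
    constructor
    · rw [← lowSum_eq hkn, hN]
    · rw [expE_proj hkn s hs e hS]
      exact hmem
  · intro t ht
    obtain ⟨hmem, hsupp⟩ := Finset.mem_filter.1 ht
    rw [Finset.mem_filter]
    refine ⟨hsupp, ?_⟩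
    rw [lowSum_expE hkn t s hs, highPart_expE hkn t s hs,
      Finset.Nat.mem_antidiagonalTuple.1 hmem]
  · intro e he
    obtain ⟨hmem, heq⟩ := Finset.mem_filter.1 he
    obtain ⟨hN, hS⟩ := psiN_inj heq
    exact expE_proj hkn s hs e hS
  · intro t ht
    funext j
    exact expE_castLE hkn t s hs j
  · intro e he
    obtain ⟨hmem, heq⟩ := Finset.mem_filter.1 he
    obtain ⟨hN, hS⟩ := psiN_inj heq
    rw [expE_proj hkn s hs e hS]

/-! ### Pairing computations -/

lemma B_X0_filter {n : ℕ} (B : MvPolynomial ℕ ℂ →ₗ[ℂ] (MvPolynomial (Fin n) ℂ →ₗ[ℂ] ℂ))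
    (f : MvPolynomial (Fin n) ℂ) (hsym : f.IsSymmetric)
    (hB : ∀ (t : Fin n → ℕ) (g : MvPolynomial (Fin n) ℂ), g.IsSymmetric →
      B (∏ j : Fin n, X (t j)) g = coeff (∑ j : Fin n, Finsupp.single j (t j)) g)
    (c : ℕ) (hcn : c ≤ n) (s : Fin n →₀ ℕ) (hs : ∀ i : Fin n, (i : ℕ) < c → s i = 0) :
    B ((X 0) ^ c * ∏ i ∈ Finset.univ.filter (fun i : Fin n => ¬ (i : ℕ) < c), X (s i)) f
      = coeff s f := by
  classical
  have h2 : (∏ i ∈ Finset.univ.filter (fun i : Fin n => (i : ℕ) < c),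
      (X (s i) : MvPolynomial ℕ ℂ)) = (X 0) ^ c := by
    rw [prod_filter_lt hcn (fun i => (X (s i) : MvPolynomial ℕ ℂ))]
    rw [Finset.prod_congr rfl (fun j _ => by
      rw [hs (Fin.castLE hcn j) j.isLt] : ∀ j ∈ Finset.univ,
        (X (s (Fin.castLE hcn j)) : MvPolynomial ℕ ℂ) = X 0)]
    rw [Finset.prod_const, Finset.card_univ, Fintype.card_fin]
  have hprod : ((X 0 : MvPolynomial ℕ ℂ)) ^ c
        * ∏ i ∈ Finset.univ.filter (fun i : Fin n => ¬ (i : ℕ) < c), X (s i)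
      = ∏ i : Fin n, X (s i) := by
    rw [← h2, Finset.prod_filter_mul_prod_filter_not]
  rw [hprod, hB (fun i => s i) f hsym]
  congr 1
  ext a
  rw [sum_single_apply]

lemma B_coefPow_filter {n : ℕ} (B : MvPolynomial ℕ ℂ →ₗ[ℂ] (MvPolynomial (Fin n) ℂ →ₗ[ℂ] ℂ))
    (f : MvPolynomial (Fin n) ℂ) (hsym : f.IsSymmetric)
    (hB : ∀ (t : Fin n → ℕ) (g : MvPolynomial (Fin n) ℂ), g.IsSymmetric →
      B (∏ j : Fin n, X (t j)) g = coeff (∑ j : Fin n, Finsupp.single j (t j)) g)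
    (k N : ℕ) (hkn : k + 1 ≤ n) (s : Fin n →₀ ℕ)
    (hs : ∀ i : Fin n, (i : ℕ) < k + 1 → s i = 0) :
    B (coefPow k N * ∏ i ∈ Finset.univ.filter (fun i : Fin n => ¬ (i : ℕ) < k + 1), X (s i)) f
      = ∑ t ∈ Finset.Nat.antidiagonalTuple (k + 1) N, coeff (expE hkn t s) f := by
  classical
  rw [coefPow, Finset.sum_mul, map_sum, LinearMap.coe_sum, Finset.sum_apply]
  refine Finset.sum_congr rfl (fun t ht => ?_)
  set u : Fin n → ℕ := fun i => if h : (i : ℕ) < k + 1 then t ⟨(i : ℕ), h⟩ else s i with hu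
  have hq : (∏ j : Fin (k + 1), (X (t j) : MvPolynomial ℕ ℂ))
        * ∏ i ∈ Finset.univ.filter (fun i : Fin n => ¬ (i : ℕ) < k + 1), X (s i)
      = ∏ i : Fin n, X (u i) := by
    rw [← Finset.prod_filter_mul_prod_filter_not Finset.univ
      (fun i : Fin n => (i : ℕ) < k + 1) (fun i => (X (u i) : MvPolynomial ℕ ℂ))]
    congr 1
    · rw [prod_filter_lt hkn (fun i => (X (u i) : MvPolynomial ℕ ℂ))]
      apply Finset.prod_congr rfl
      intro j _
      congr 1
      rw [hu]
      simp only []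
      rw [dif_pos (show ((Fin.castLE hkn j : Fin n) : ℕ) < k + 1 from j.isLt)]
      exact congrArg t (Fin.ext rfl)
    · apply Finset.prod_congr rfl
      intro i hi
      have hni : ¬ (i : ℕ) < k + 1 := by simpa using hi
      congr 1
      rw [hu]
      simp only []
      rw [dif_neg hni]
  rw [hq, hB u f hsym]
  congr 1
  ext a
  rw [sum_single_apply, expE_apply]
  rw [hu]
  simp only []
  by_cases ha : (a : ℕ) < k + 1
  · rw [dif_pos ha, dif_pos ha, hs a ha, zero_add]
  · rw [dif_neg ha, dif_neg ha, add_zero]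

/-! ### Homogeneity -/

lemma coefPow_homog (k N : ℕ) : (coefPow k N).IsHomogeneous (k + 1) := by
  rw [coefPow]
  apply IsHomogeneous.sum
  intro t _
  have h := IsHomogeneous.prod Finset.univ (fun j : Fin (k + 1) => (X (t j) : MvPolynomial ℕ ℂ))
    (fun _ => 1) (fun j _ => isHomogeneous_X _ _)
  simpa using h

lemma prod_X_filter_homog {n c : ℕ} (s : Fin n → ℕ) :
    (∏ i ∈ Finset.univ.filter (fun i : Fin n => ¬ (i : ℕ) < c), (X (s i) : MvPolynomial ℕ ℂ)).IsHomogeneous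
      ((Finset.univ.filter (fun i : Fin n => ¬ (i : ℕ) < c)).card) := by
  have h := IsHomogeneous.prod (Finset.univ.filter (fun i : Fin n => ¬ (i : ℕ) < c))
    (fun i => (X (s i) : MvPolynomial ℕ ℂ)) (fun _ => 1) (fun i _ => isHomogeneous_X _ _)
  simpa using h

lemma card_filter_not_lt {n c : ℕ} (hcn : c ≤ n) :
    (Finset.univ.filter (fun i : Fin n => ¬ (i : ℕ) < c)).card = n - c := by
  have h := Finset.card_filter_add_card_filter_not (s := (Finset.univ : Finset (Fin n)))
    (p := fun i : Fin n => (i : ℕ) < c)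
  rw [card_filter_lt hcn, Finset.card_univ, Fintype.card_fin] at h
  omega

/-! ### Presenting a monomial as a product over the tail -/

lemma exists_good {n : ℕ} (c : ℕ) (d : ℕ →₀ ℕ) (h : c + d.degree = n) :
    ∃ s : Fin n →₀ ℕ, (∀ i : Fin n, (i : ℕ) < c → s i = 0) ∧
      (∏ i ∈ Finset.univ.filter (fun i : Fin n => ¬ (i : ℕ) < c),
        (X (s i) : MvPolynomial ℕ ℂ)) = monomial d 1 := by
  classical
  set l := (Finsupp.toMultiset d).toList with hldef
  have hl : l.length = d.degree := length_toList d
  have hln : c + l.length = n := by omega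
  set v : Fin n → ℕ := fun i => if hi : (i : ℕ) < c then 0
    else l.get ⟨(i : ℕ) - c, by have h1 := i.isLt; omega⟩ with hv
  refine ⟨Finsupp.equivFunOnFinite.symm v, ?_, ?_⟩
  · intro i hi
    show Finsupp.equivFunOnFinite.symm v i = 0
    rw [Finsupp.equivFunOnFinite_symm_apply_apply, hv]
    simp only []
    rw [dif_pos hi]
  · have hcoe : ∀ i : Fin n, (Finsupp.equivFunOnFinite.symm v) i = v i :=
      fun i => Finsupp.equivFunOnFinite_symm_apply_apply v i
    rw [Finset.prod_congr rfl (fun i _ => by rw [hcoe i] :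
      ∀ i ∈ Finset.univ.filter (fun i : Fin n => ¬ (i : ℕ) < c),
        (X ((Finsupp.equivFunOnFinite.symm v) i) : MvPolynomial ℕ ℂ) = X (v i))]
    rw [prod_filter_ge hln (fun i => (X (v i) : MvPolynomial ℕ ℂ))]
    rw [← prod_map_X_toList d, ← prod_fin_get l rfl]
    apply Finset.prod_congr rfl
    intro j _
    congr 1
    have hj : ¬ ((tailEmb hln j : Fin n) : ℕ) < c := by
      show ¬ c + (j : ℕ) < c
      omega
    rw [hv]
    simp only []
    rw [dif_neg hj]
    congr 1
    apply Fin.ext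
    show c + (j : ℕ) - c = ((Fin.cast rfl j : Fin l.length) : ℕ)
    rw [Fin.coe_cast]
    omega

/-! ### Span machinery -/

def genSet (k b0 : ℕ) : Set (MvPolynomial ℕ ℂ) :=
  {X 0 ^ (b0 + 1)} ∪ {P : MvPolynomial ℕ ℂ | ∃ N, P = coefPow k N}

noncomputable def bigSpan (k b0 : ℕ) : Submodule ℂ (MvPolynomial ℕ ℂ) :=
  Submodule.span ℂ {q | ∃ (d : ℕ →₀ ℕ) (g : MvPolynomial ℕ ℂ),
    g ∈ genSet k b0 ∧ q = monomial d 1 * g}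

lemma mul_mem_bigSpan (k b0 : ℕ) (r : MvPolynomial ℕ ℂ) {x : MvPolynomial ℕ ℂ}
    (hx : x ∈ bigSpan k b0) : r * x ∈ bigSpan k b0 := by
  refine Submodule.span_induction ?_ ?_ ?_ ?_ hx
  · rintro q ⟨d, g, hg, rfl⟩
    have hsum : r * (monomial d 1 * g)
        = ∑ d' ∈ r.support, monomial d' (coeff d' r) * (monomial d 1 * g) := by
      conv_lhs => rw [r.as_sum]
      rw [Finset.sum_mul]
    rw [hsum]
    apply Submodule.sum_mem
    intro d' _
    have heq : (monomial d' (coeff d' r) : MvPolynomial ℕ ℂ) * (monomial d 1 * g)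
        = (coeff d' r) • (monomial (d' + d) 1 * g) := by
      rw [← mul_assoc, monomial_mul, mul_one, ← smul_mul_assoc, smul_monomial, smul_eq_mul, mul_one]
    rw [heq]
    exact Submodule.smul_mem _ _ (Submodule.subset_span ⟨d' + d, g, hg, rfl⟩)
  · rw [mul_zero]; exact Submodule.zero_mem _
  · intro a b _ _ ha hb
    rw [mul_add]; exact Submodule.add_mem _ ha hb
  · intro a y _ hy
    rw [mul_smul_comm]; exact Submodule.smul_mem _ _ hy

lemma span_sub_bigSpan (k b0 : ℕ) {P : MvPolynomial ℕ ℂ}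
    (hP : P ∈ Ideal.span (genSet k b0)) : P ∈ bigSpan k b0 := by
  refine Submodule.span_induction ?_ ?_ ?_ ?_ hP
  · intro x hx
    exact Submodule.subset_span ⟨0, x, hx, by rw [monomial_zero', C_1, one_mul]⟩
  · exact Submodule.zero_mem _
  · intro a b _ _ ha hb
    exact Submodule.add_mem _ ha hb
  · intro a y _ hy
    rw [smul_eq_mul]
    exact mul_mem_bigSpan k b0 a hy

end OCK2

/-- Let `J^{(k,2)}` be the ideal of `ℂ[e[0], e[-1], …]` generated by all
coefficients of `e(z)^{k+1}` together with `e[0]^{b₀+1}`, and let `B` be the pairing with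
`⟨e(z_1)⋯e(z_n), f⟩ = f(z_1,…,z_n)`.  A symmetric polynomial `f` in `n` variables is
orthogonal to the degree-`n` component `J_n^{(k,2)}` iff `f = 0` whenever
`x_1 = ⋯ = x_{k+1}` and `f = 0` whenever `x_1 = ⋯ = x_{b₀+1} = 0`. -/
theorem orthogonal_complement_k2 (k b0 n : ℕ) (hb0 : b0 ≤ k)
    (B : MvPolynomial ℕ ℂ →ₗ[ℂ] (MvPolynomial (Fin n) ℂ →ₗ[ℂ] ℂ))
    (hB : ∀ (t : Fin n → ℕ) (g : MvPolynomial (Fin n) ℂ), g.IsSymmetric →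
      B (∏ j : Fin n, X (t j)) g = coeff (∑ j : Fin n, Finsupp.single j (t j)) g)
    (f : MvPolynomial (Fin n) ℂ) (hsym : f.IsSymmetric) :
    (∀ P ∈ Ideal.span
        ({X 0 ^ (b0 + 1)} ∪ {P : MvPolynomial ℕ ℂ | ∃ N, P = coefPow k N}),
      P.IsHomogeneous n → B P f = 0) ↔
    ((k + 1 ≤ n →
        aeval (fun i : Fin n => if (i : ℕ) < k + 1 then
          (X (Sum.inl ()) : MvPolynomial (Unit ⊕ Fin n) ℂ) else X (Sum.inr i)) f = 0) ∧
     (b0 + 1 ≤ n →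
        aeval (fun i : Fin n => if (i : ℕ) < b0 + 1 then (0 : MvPolynomial (Fin n) ℂ)
          else X i) f = 0)) := by
  classical
  constructor
  · intro hL
    constructor
    · intro hkn
      refine MvPolynomial.ext _ _ (fun κ => ?_)
      rw [coeff_zero, OCK2.coeff_aeval1 k f κ]
      by_cases hex : ∃ e ∈ f.support, OCK2.psiN (OCK2.lowSum k e) (OCK2.highPart k e) = κ
      · obtain ⟨e0, he0, heq⟩ := hex
        have hs : ∀ i : Fin n, (i : ℕ) < k + 1 → OCK2.highPart k e0 i = 0 :=
          fun i hi => OCK2.highPart_apply_low k e0 hi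
        rw [← heq, OCK2.fiber_sum hkn f (OCK2.lowSum k e0) (OCK2.highPart k e0) hs]
        rw [← OCK2.B_coefPow_filter B f hsym hB k (OCK2.lowSum k e0) hkn _ hs]
        apply hL
        · exact Ideal.mul_mem_right _ _ (Ideal.subset_span (Or.inr ⟨_, rfl⟩))
        · have h1 := OCK2.coefPow_homog k (OCK2.lowSum k e0)
          have h2 := OCK2.prod_X_filter_homog (n := n) (c := k + 1)
            (fun i => (OCK2.highPart k e0) i)
          rw [OCK2.card_filter_not_lt hkn] at h2
          have h3 := h1.mul h2
          have hn : (k + 1) + (n - (k + 1)) = n := by omega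
          rw [hn] at h3
          exact h3
      · push_neg at hex
        apply Finset.sum_eq_zero
        intro e he
        rw [if_neg (hex e he)]
    · intro hb0n
      rw [OCK2.aeval2_eq_zero_iff]
      intro e hgood
      rw [← OCK2.B_X0_filter B f hsym hB (b0 + 1) hb0n e hgood]
      apply hL
      · exact Ideal.mul_mem_right _ _ (Ideal.subset_span (Or.inl rfl))
      · have h1 : ((X 0 : MvPolynomial ℕ ℂ) ^ (b0 + 1)).IsHomogeneous (b0 + 1) := by
          simpa using (isHomogeneous_X ℂ (0 : ℕ)).pow (b0 + 1)
        have h2 := OCK2.prod_X_filter_homog (n := n) (c := b0 + 1) (fun i => e i)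
        rw [OCK2.card_filter_not_lt hb0n] at h2
        have h3 := h1.mul h2
        have hn : (b0 + 1) + (n - (b0 + 1)) = n := by omega
        rw [hn] at h3
        exact h3
  · rintro ⟨h1, h2⟩ P hP hhom
    have hPM : P ∈ OCK2.bigSpan k b0 := OCK2.span_sub_bigSpan k b0 hP
    have key : ∀ x ∈ OCK2.bigSpan k b0, B ((homogeneousComponent n) x) f = 0 := by
      intro x hx
      refine Submodule.span_induction ?_ ?_ ?_ ?_ hx
      · rintro q ⟨d, g, hg, rfl⟩
        rcases hg with hg | ⟨N, rfl⟩
        · rw [Set.mem_singleton_iff] at hg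
          subst hg
          have hq : ((monomial d (1 : ℂ)) * X 0 ^ (b0 + 1)).IsHomogeneous
              (d.degree + (b0 + 1)) := by
            apply (isHomogeneous_monomial _ rfl).mul
            simpa using (isHomogeneous_X ℂ (0 : ℕ)).pow (b0 + 1)
          rw [homogeneousComponent_of_mem ((mem_homogeneousSubmodule _ _).2 hq)]
          split_ifs with hdeg
          · have hb0n : b0 + 1 ≤ n := by omega
            obtain ⟨s, hs, hQ⟩ := OCK2.exists_good (n := n) (b0 + 1) d (by omega)
            have hrw : (monomial d (1 : ℂ)) * X 0 ^ (b0 + 1)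
                = X 0 ^ (b0 + 1) * ∏ i ∈ Finset.univ.filter
                    (fun i : Fin n => ¬ (i : ℕ) < b0 + 1), X (s i) := by
              rw [hQ, mul_comm]
            rw [hrw, OCK2.B_X0_filter B f hsym hB (b0 + 1) hb0n s hs]
            exact (OCK2.aeval2_eq_zero_iff (b0 + 1) f).1 (h2 hb0n) s hs
          · rw [map_zero, LinearMap.zero_apply]
        · have hq : ((monomial d (1 : ℂ)) * coefPow k N).IsHomogeneous
              (d.degree + (k + 1)) :=
            (isHomogeneous_monomial _ rfl).mul (OCK2.coefPow_homog k N)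
          rw [homogeneousComponent_of_mem ((mem_homogeneousSubmodule _ _).2 hq)]
          split_ifs with hdeg
          · have hkn : k + 1 ≤ n := by omega
            obtain ⟨s, hs, hQ⟩ := OCK2.exists_good (n := n) (k + 1) d (by omega)
            have hrw : (monomial d (1 : ℂ)) * coefPow k N
                = coefPow k N * ∏ i ∈ Finset.univ.filter
                    (fun i : Fin n => ¬ (i : ℕ) < k + 1), X (s i) := by
              rw [hQ, mul_comm]
            rw [hrw, OCK2.B_coefPow_filter B f hsym hB k N hkn s hs]
            rw [← OCK2.fiber_sum hkn f N s hs, ← OCK2.coeff_aeval1 k f (OCK2.psiN N s)]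
            rw [h1 hkn, coeff_zero]
          · rw [map_zero, LinearMap.zero_apply]
      · rw [map_zero, map_zero, LinearMap.zero_apply]
      · intro a b _ _ ha hb
        rw [map_add, map_add, LinearMap.add_apply, ha, hb, add_zero]
      · intro a y _ hy
        rw [map_smul, map_smul, LinearMap.smul_apply, hy, smul_zero]
    have hcP : homogeneousComponent n P = P := by
      rw [homogeneousComponent_of_mem ((mem_homogeneousSubmodule _ _).2 hhom), if_pos rfl]
    rw [← hcP]
    exact key P hPM
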